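/- Let F be a self-similar set with feasible open set O satisfying OSC, let G := O ∖ ⋃ᵢ closure(Sᵢ O) and Γ := O ∖ ⋃ᵢ Sᵢ(O). Then G is open, G ⊆ Γ ⊆ G ∪ ⋃ᵢ ∂(Sᵢ O), and G = int(Γ). Moreover the family T(O) := {S_w(G) : w a finite word} is a tiling of O: distinct tiles are disjoint and closure(O) = closure(⋃_{R ∈ T(O)} R). -/

import Mathlib

open MeasureTheory Metric

/-- Composition S_w = S_{w₁} ∘ ⋯ ∘ S_{w_m} of IFS maps along a finite word w. -/
def wordMap {n N : ℕ}
    (S : Fin N → EuclideanSpace ℝ (Fin n) → EuclideanSpace ℝ (Fin n))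
    (w : List (Fin N)) : EuclideanSpace ℝ (Fin n) → EuclideanSpace ℝ (Fin n) :=
  (w.map S).foldr (· ∘ ·) id

lemma wordMap_nil {n N : ℕ}
    (S : Fin N → EuclideanSpace ℝ (Fin n) → EuclideanSpace ℝ (Fin n)) :
    wordMap S [] = id := rfl

lemma wordMap_cons {n N : ℕ}
    (S : Fin N → EuclideanSpace ℝ (Fin n) → EuclideanSpace ℝ (Fin n))
    (i : Fin N) (w : List (Fin N)) :
    wordMap S (i :: w) = S i ∘ wordMap S w := rfl

lemma wordMap_append {n N : ℕ}
    (S : Fin N → EuclideanSpace ℝ (Fin n) → EuclideanSpace ℝ (Fin n))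
    (w v : List (Fin N)) :
    wordMap S (w ++ v) = wordMap S w ∘ wordMap S v := by
  induction w with
  | nil => rfl
  | cons i u ih =>
    rw [List.cons_append, wordMap_cons, ih, wordMap_cons]
    rfl

/-- the self-similar tiling of a feasible open set O. With
G := O ∖ ⋃ᵢ cl(Sᵢ O) and Γ := O ∖ ⋃ᵢ Sᵢ(O): G is open, G ⊆ Γ ⊆ G ∪ ⋃ᵢ ∂(Sᵢ O),
G = int(Γ), distinct tiles S_w(G) are disjoint, and cl(O) = cl(⋃ tiles). -/
theorem self_similar_tiling {n N : ℕ} (hN : 0 < N)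
    (S : Fin N → EuclideanSpace ℝ (Fin n) → EuclideanSpace ℝ (Fin n))
    (r : Fin N → ℝ) (hr : ∀ i, r i ∈ Set.Ioo (0 : ℝ) 1)
    (hsim : ∀ i x y, dist (S i x) (S i y) = r i * dist x y)
    (F : Set (EuclideanSpace ℝ (Fin n))) (hFcomp : IsCompact F) (hFne : F.Nonempty)
    (hFinv : F = ⋃ i, S i '' F) (hdimH : dimH F < n)
    (O : Set (EuclideanSpace ℝ (Fin n))) (hOopen : IsOpen O) (hOne : O.Nonempty)
    (hObdd : Bornology.IsBounded O)
    (hOSC₁ : (⋃ i, S i '' O) ⊆ O)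
    (hOSC₂ : ∀ i j, i ≠ j → Disjoint (S i '' O) (S j '' O)) :
    IsOpen (O \ ⋃ i, closure (S i '' O)) ∧
    (O \ ⋃ i, closure (S i '' O)) ⊆ (O \ ⋃ i, S i '' O) ∧
    (O \ ⋃ i, S i '' O) ⊆ (O \ ⋃ i, closure (S i '' O)) ∪ ⋃ i, frontier (S i '' O) ∧
    (O \ ⋃ i, closure (S i '' O)) = interior (O \ ⋃ i, S i '' O) ∧
    (∀ w w' : List (Fin N),
      wordMap S w '' (O \ ⋃ i, closure (S i '' O)) ≠
        wordMap S w' '' (O \ ⋃ i, closure (S i '' O)) →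
      Disjoint (wordMap S w '' (O \ ⋃ i, closure (S i '' O)))
        (wordMap S w' '' (O \ ⋃ i, closure (S i '' O)))) ∧
    closure O = closure (⋃ w : List (Fin N),
      wordMap S w '' (O \ ⋃ i, closure (S i '' O))) := by
  haveI hNe : Nonempty (Fin N) := ⟨⟨0, hN⟩⟩
  set G := O \ ⋃ i, closure (S i '' O) with hGdef
  -- basic facts about the maps
  have hScont : ∀ i, Continuous (S i) := fun i =>
    (LipschitzWith.of_dist_le_mul (K := ⟨r i, (hr i).1.le⟩)
      fun x y => (hsim i x y).le).continuous
  have hSinj : ∀ i, Function.Injective (S i) := by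
    intro i x y h
    have h2 := hsim i x y
    rw [h, dist_self] at h2
    rcases mul_eq_zero.mp h2.symm with h3 | h3
    · exact absurd h3 (hr i).1.ne'
    · exact dist_eq_zero.mp h3
  have hclosed : IsClosed (⋃ i, closure (S i '' O)) :=
    isClosed_iUnion_of_finite fun i => isClosed_closure
  have hGopen : IsOpen G := hOopen.sdiff hclosed
  have hGO : G ⊆ O := Set.diff_subset
  have hsub1 : G ⊆ O \ ⋃ i, S i '' O :=
    Set.diff_subset_diff_right (Set.iUnion_mono fun i => subset_closure)
  have hsub2 : (O \ ⋃ i, S i '' O) ⊆ G ∪ ⋃ i, frontier (S i '' O) := by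
    rintro x ⟨hxO, hxn⟩
    by_cases hc : x ∈ ⋃ i, closure (S i '' O)
    · right
      obtain ⟨i, hi⟩ := Set.mem_iUnion.mp hc
      refine Set.mem_iUnion.mpr ⟨i, ?_⟩
      exact ⟨hi, fun h => hxn (Set.mem_iUnion.mpr ⟨i, interior_subset h⟩)⟩
    · left; exact ⟨hxO, hc⟩
  have hGint : G = interior (O \ ⋃ i, S i '' O) := by
    apply Set.Subset.antisymm
    · exact interior_maximal hsub1 hGopen
    · intro x hx
      refine ⟨(interior_subset hx).1, ?_⟩
      intro hc
      obtain ⟨i, hi⟩ := Set.mem_iUnion.mp hc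
      have hsub : (O \ ⋃ i, S i '' O) ⊆ (S i '' O)ᶜ :=
        fun y hy hyi => hy.2 (Set.mem_iUnion.mpr ⟨i, hyi⟩)
      have : x ∈ interior ((S i '' O)ᶜ) := interior_mono hsub hx
      rw [interior_compl] at this
      exact this hi
  -- words map G into O
  have hWG_O : ∀ w : List (Fin N), wordMap S w '' G ⊆ O := by
    intro w
    induction w with
    | nil => rw [wordMap_nil, Set.image_id]; exact hGO
    | cons i u ih =>
      rw [wordMap_cons, Set.image_comp]
      exact (Set.image_mono ih).trans
        ((Set.subset_iUnion (fun j => S j '' O) i).trans hOSC₁)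
  have hGdisj : ∀ i, Disjoint G (S i '' O) := fun i =>
    Set.disjoint_left.mpr fun x hx hxi =>
      hx.2 (Set.mem_iUnion.mpr ⟨i, subset_closure hxi⟩)
  -- disjointness of distinct tiles
  have hdisj : ∀ w w' : List (Fin N), w ≠ w' →
      Disjoint (wordMap S w '' G) (wordMap S w' '' G) := by
    have key : ∀ (j : Fin N) (v : List (Fin N)),
        Disjoint G (wordMap S (j :: v) '' G) := by
      intro j v
      refine (hGdisj j).mono_right ?_
      rw [wordMap_cons, Set.image_comp]
      exact Set.image_mono (hWG_O v)
    intro w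
    induction w with
    | nil =>
      intro w' hne
      cases w' with
      | nil => exact absurd rfl hne
      | cons j v =>
        rw [wordMap_nil, Set.image_id]
        exact key j v
    | cons i u ih =>
      intro w' hne
      cases w' with
      | nil =>
        rw [wordMap_nil, Set.image_id]
        exact (key i u).symm
      | cons j v =>
        by_cases hij : i = j
        · subst hij
          have huv : u ≠ v := fun h => hne (by rw [h])
          rw [wordMap_cons S i u, wordMap_cons S i v, Set.image_comp, Set.image_comp]
          exact Set.disjoint_image_of_injective (hSinj i) (ih v huv)
        · rw [wordMap_cons, Set.image_comp, wordMap_cons, Set.image_comp]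
          exact (hOSC₂ i j hij).mono (Set.image_mono (hWG_O u))
            (Set.image_mono (hWG_O v))
  -- compactness / attractor facts
  have hclO_comp : IsCompact (closure O) := hObdd.isCompact_closure
  have hSclO : ∀ i, S i '' closure O ⊆ closure O := fun i =>
    (image_closure_subset_closure_image (hScont i)).trans
      (closure_mono ((Set.subset_iUnion (fun j => S j '' O) i).trans hOSC₁))
  have hclim : ∀ i, closure (S i '' O) ⊆ S i '' closure O := fun i =>
    closure_minimal (Set.image_mono subset_closure)
      (hclO_comp.image (hScont i)).isClosed
  have hKne : (closure O).Nonempty := hOne.closure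
  have hFclO : F ⊆ closure O := by
    obtain ⟨x₀, hx₀F, hmax⟩ := hFcomp.exists_isMaxOn hFne
      (continuous_infDist_pt (closure O)).continuousOn
    have hx0 : infDist x₀ (closure O) = 0 := by
      have hx₀' : x₀ ∈ ⋃ i, S i '' F := hFinv ▸ hx₀F
      obtain ⟨i, y, hyF, hxy⟩ := Set.mem_iUnion.mp hx₀'
      obtain ⟨k, hkK, hk⟩ := hclO_comp.exists_infDist_eq_dist hKne y
      have h1 : infDist x₀ (closure O) ≤ r i * infDist y (closure O) := by
        rw [hk, ← hsim i y k, ← hxy]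
        exact infDist_le_dist_of_mem (hSclO i ⟨k, hkK, rfl⟩)
      have h2 : infDist y (closure O) ≤ infDist x₀ (closure O) := hmax hyF
      have h3 := (hr i).1
      have h4 := (hr i).2
      have h5 : (0:ℝ) ≤ infDist x₀ (closure O) := infDist_nonneg
      nlinarith
    intro z hz
    have hz0 : infDist z (closure O) = 0 :=
      le_antisymm (hx0 ▸ hmax hz) infDist_nonneg
    have := (mem_closure_iff_infDist_zero hKne).mpr hz0
    rwa [closure_closure] at this
  have hSF : ∀ i, S i '' F ⊆ F := by
    intro i
    conv_rhs => rw [hFinv]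
    exact Set.subset_iUnion (fun j => S j '' F) i
  have hWF : ∀ w : List (Fin N), wordMap S w '' F ⊆ F := by
    intro w
    induction w with
    | nil => rw [wordMap_nil, Set.image_id]
    | cons i u ih =>
      rw [wordMap_cons, Set.image_comp]
      exact (Set.image_mono ih).trans (hSF i)
  have hWcont : ∀ w : List (Fin N), Continuous (wordMap S w) := by
    intro w
    induction w with
    | nil => exact continuous_id
    | cons i u ih => exact (hScont i).comp ih
  have hWdist : ∀ (w : List (Fin N)) x y,
      dist (wordMap S w x) (wordMap S w y) = (w.map r).prod * dist x y := by
    intro w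
    induction w with
    | nil => intro x y; simp [wordMap_nil]
    | cons i u ih =>
      intro x y
      rw [wordMap_cons]
      simp only [Function.comp_apply, List.map_cons, List.prod_cons]
      rw [hsim, ih, mul_assoc]
  -- the one-step decomposition
  have hstep : closure O ⊆ closure G ∪ ⋃ i, S i '' closure O := by
    have h1 : O ⊆ closure G ∪ ⋃ i, S i '' closure O := by
      intro x hx
      by_cases hc : x ∈ ⋃ i, closure (S i '' O)
      · obtain ⟨i, hi⟩ := Set.mem_iUnion.mp hc
        exact Or.inr (Set.mem_iUnion.mpr ⟨i, hclim i hi⟩)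
      · exact Or.inl (subset_closure ⟨hx, hc⟩)
    exact closure_minimal h1 (isClosed_closure.union
      (isClosed_iUnion_of_finite fun i => (hclO_comp.image (hScont i)).isClosed))
  set T := ⋃ w : List (Fin N), wordMap S w '' G with hTdef
  have hiter : ∀ (m : ℕ) (x : EuclideanSpace ℝ (Fin n)), x ∈ closure O →
      x ∈ closure T ∨
        ∃ w : List (Fin N), w.length = m ∧ x ∈ wordMap S w '' closure O := by
    intro m
    induction m with
    | zero =>
      intro x hx
      exact Or.inr ⟨[], rfl, x, hx, rfl⟩
    | succ m ih =>
      intro x hx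
      rcases ih x hx with h | ⟨w, hwl, y, hy, hxy⟩
      · exact Or.inl h
      rcases hstep hy with hyG | hyS
      · left
        have h1 : x ∈ closure (wordMap S w '' G) :=
          image_closure_subset_closure_image (hWcont w) ⟨y, hyG, hxy⟩
        exact closure_mono (Set.subset_iUnion (fun w => wordMap S w '' G) w) h1
      · obtain ⟨i, z, hz, hzy⟩ := Set.mem_iUnion.mp hyS
        right
        refine ⟨w ++ [i], by simp [hwl], z, hz, ?_⟩
        rw [wordMap_append]
        show wordMap S w (wordMap S [i] z) = x
        rw [show wordMap S [i] z = S i z from rfl, hzy, hxy]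
  -- contraction ratio bound
  set ρ := Finset.univ.sup' Finset.univ_nonempty r with hρdef
  have hρ1 : ρ < 1 := (Finset.sup'_lt_iff _).mpr fun i _ => (hr i).2
  have hρi : ∀ i, r i ≤ ρ := fun i => Finset.le_sup' r (Finset.mem_univ i)
  have hρ0 : (0:ℝ) ≤ ρ :=
    le_trans (hr (Classical.arbitrary _)).1.le (hρi _)
  have hprod : ∀ w : List (Fin N),
      0 ≤ (w.map r).prod ∧ (w.map r).prod ≤ ρ ^ w.length := by
    intro w
    induction w with
    | nil => simp
    | cons i u ih =>
      simp only [List.map_cons, List.prod_cons, List.length_cons]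
      constructor
      · exact mul_nonneg (hr i).1.le ih.1
      · calc r i * (u.map r).prod ≤ ρ * ρ ^ u.length :=
              mul_le_mul (hρi i) ih.2 ih.1 hρ0
          _ = ρ ^ (u.length + 1) := by ring
  have hTO : T ⊆ O := Set.iUnion_subset hWG_O
  -- the tiling covers O up to closure
  have hfinal : closure O = closure T := by
    apply Set.Subset.antisymm
    · have hUF : ∀ z ∈ O \ closure T, z ∈ F := by
        rintro z ⟨hzO, hzT⟩
        have hz : ∀ m : ℕ, ∃ w : List (Fin N),
            w.length = m ∧ z ∈ wordMap S w '' closure O := by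
          intro m
          rcases hiter m z (subset_closure hzO) with h | h
          · exact absurd h hzT
          · exact h
        have hinf : ∀ m : ℕ, infDist z F ≤ ρ ^ m * diam (closure O) := by
          intro m
          obtain ⟨w, hwl, a, ha, hza⟩ := hz m
          obtain ⟨y, hyF⟩ := hFne
          have hyK : y ∈ closure O := hFclO hyF
          have h1 : wordMap S w y ∈ F := hWF w ⟨y, hyF, rfl⟩
          have h2 : dist z (wordMap S w y) = (w.map r).prod * dist a y := by
            rw [← hza, hWdist]
          have h3 : dist a y ≤ diam (closure O) :=
            dist_le_diam_of_mem hObdd.closure ha hyK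
          calc infDist z F ≤ dist z (wordMap S w y) := infDist_le_dist_of_mem h1
            _ = (w.map r).prod * dist a y := h2
            _ ≤ ρ ^ m * diam (closure O) := by
                rw [← hwl]
                exact mul_le_mul (hprod w).2 h3 dist_nonneg (pow_nonneg hρ0 _)
        have h0 : infDist z F ≤ 0 := by
          have ht : Filter.Tendsto (fun m : ℕ => ρ ^ m * diam (closure O))
              Filter.atTop (nhds 0) := by
            simpa using
              (tendsto_pow_atTop_nhds_zero_of_lt_one hρ0 hρ1).mul_const
                (diam (closure O))
          exact ge_of_tendsto' ht hinf
        have hz0 : infDist z F = 0 := le_antisymm h0 infDist_nonneg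
        have := (mem_closure_iff_infDist_zero hFne).mpr hz0
        rwa [hFcomp.isClosed.closure_eq] at this
      have hOsub : O ⊆ closure T := by
        by_contra hcon
        obtain ⟨x, hxO, hxT⟩ := Set.not_subset.mp hcon
        have hUopen : IsOpen (O \ closure T) := hOopen.sdiff isClosed_closure
        have hdense : Dense Fᶜ := by
          apply dense_compl_of_dimH_lt_finrank
          rwa [finrank_euclideanSpace_fin]
        obtain ⟨p, hpc, hpU⟩ := hdense.exists_mem_open hUopen ⟨x, hxO, hxT⟩
        exact hpc (hUF p hpU)
      exact closure_minimal hOsub isClosed_closure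
    · exact closure_mono hTO
  refine ⟨hGopen, hsub1, hsub2, hGint, ?_, hfinal⟩
  intro w w' hne'
  by_cases h : w = w'
  · exact absurd (by rw [h]) hne'
  · exact hdisj w w' h
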